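/- With ρ = 0, the MSE σ²_θ(Q₁,Q₂) = (s₁ + s₂ + c(α₂²Q₂ + α₁²Q₁)s₁s₂) / ((1 + cα₁²s₁Q₁)(1 + cα₂²s₂Q₂)) is strictly decreasing in Q₁ and in Q₂ for Q₁, Q₂ > 0; hence it is minimized on [0,Q₁ᵐᵃˣ]×[0,Q₂ᵐᵃˣ] at (Q₁ᵐᵃˣ, Q₂ᵐᵃˣ). -/
import Mathlib


theorem stmt_9 (s₁ s₂ c α₁ α₂ Q₁max Q₂max : ℝ)
    (hs₁ : 0 < s₁) (hs₂ : 0 < s₂) (hc : 0 < c) (hα₁ : 0 < α₁) (hα₂ : 0 < α₂)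
    (hQ₁ : 0 < Q₁max) (hQ₂ : 0 < Q₂max)
    (σθ : ℝ → ℝ → ℝ)
    (hσ : ∀ Q₁ Q₂, σθ Q₁ Q₂ =
      (s₁ + s₂ + c*(α₂^2*Q₂ + α₁^2*Q₁)*s₁*s₂) /
        ((1 + c*α₁^2*s₁*Q₁) * (1 + c*α₂^2*s₂*Q₂))) :
    (∀ Q₂ > 0, StrictAntiOn (fun Q₁ => σθ Q₁ Q₂) (Set.Ioi 0)) ∧
    (∀ Q₁ > 0, StrictAntiOn (fun Q₂ => σθ Q₁ Q₂) (Set.Ioi 0)) ∧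
    (∀ Q₁ ∈ Set.Icc (0:ℝ) Q₁max, ∀ Q₂ ∈ Set.Icc (0:ℝ) Q₂max,
      σθ Q₁max Q₂max ≤ σθ Q₁ Q₂) := by
  have ha : 0 < c*α₁^2*s₁ := by positivity
  have hb : 0 < c*α₂^2*s₂ := by positivity
  set a := c*α₁^2*s₁ with hadef
  set b := c*α₂^2*s₂ with hbdef
  have key : ∀ Q₁ Q₂ : ℝ, 0 ≤ Q₁ → 0 ≤ Q₂ →
      σθ Q₁ Q₂ = s₁/(1+a*Q₁) + s₂/(1+b*Q₂) := by
    intro Q₁ Q₂ h1 h2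
    have d1 : (0:ℝ) < 1 + a*Q₁ := by positivity
    have d2 : (0:ℝ) < 1 + b*Q₂ := by positivity
    rw [hσ, hadef, hbdef]
    field_simp
    ring
  have mono : ∀ s t : ℝ, 0 < s → 0 < t → ∀ x y : ℝ, 0 ≤ x → x < y →
      s/(1+t*y) < s/(1+t*x) := by
    intro s t hs ht x y hx hxy
    apply div_lt_div_of_pos_left hs (by positivity)
    nlinarith
  have mono' : ∀ s t : ℝ, 0 < s → 0 < t → ∀ x y : ℝ, 0 ≤ x → x ≤ y →
      s/(1+t*y) ≤ s/(1+t*x) := by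
    intro s t hs ht x y hx hxy
    rcases eq_or_lt_of_le hxy with rfl|h
    · exact le_refl _
    · exact (mono s t hs ht x y hx h).le
  refine ⟨?_, ?_, ?_⟩
  · intro Q₂ hQ₂' x hx y hy hxy
    simp only [Set.mem_Ioi] at hx hy
    simp only
    rw [key x Q₂ hx.le hQ₂'.le, key y Q₂ hy.le hQ₂'.le]
    have := mono s₁ a hs₁ ha x y hx.le hxy
    linarith
  · intro Q₁ hQ₁' x hx y hy hxy
    simp only [Set.mem_Ioi] at hx hy
    simp only
    rw [key Q₁ x hQ₁'.le hx.le, key Q₁ y hQ₁'.le hy.le]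
    have := mono s₂ b hs₂ hb x y hx.le hxy
    linarith
  · intro Q₁ h1 Q₂ h2
    rw [key Q₁ Q₂ h1.1 h2.1, key Q₁max Q₂max hQ₁.le hQ₂.le]
    have t1 := mono' s₁ a hs₁ ha Q₁ Q₁max h1.1 h1.2
    have t2 := mono' s₂ b hs₂ hb Q₂ Q₂max h2.1 h2.2
    linarith
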